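/- Let F(p) = (a·p² + b·p + c)/(d·p + e) be a rational function with d·p + e ≠ 0 on an open interval. Then on that interval the Monge invariant of F vanishes: 9·F''² · F⁽⁵⁾ − 45·F''·F'''·F⁗ + 40·(F''')³ = 0. -/

import Mathlib

/-- The Monge invariant of a function `F` of one variable. -/
noncomputable def monge (F : ℝ → ℝ) (p : ℝ) : ℝ :=
  9 * (iteratedDeriv 2 F p) ^ 2 * iteratedDeriv 5 F p
    - 45 * iteratedDeriv 2 F p * iteratedDeriv 3 F p * iteratedDeriv 4 F p
    + 40 * (iteratedDeriv 3 F p) ^ 3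

/-- The Monge invariant of a quadratic-over-linear rational function vanishes
on any open interval where the denominator is nonzero. -/
theorem monge_vanishes_of_rational (a b c d e : ℝ) (I : Set ℝ) (hI : IsOpen I)
    (hden : ∀ p ∈ I, d * p + e ≠ 0) :
    ∀ p ∈ I,
      monge (fun p => (a * p ^ 2 + b * p + c) / (d * p + e)) p = 0 := by
  intro p hp
  have hp0 : d * p + e ≠ 0 := hden p hp
  set C : ℝ := 2 * (a * e ^ 2 - b * d * e + c * d ^ 2) with hCdef
  set F0 : ℝ → ℝ := fun x => (a * x ^ 2 + b * x + c) / (d * x + e) with hF0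
  set F1 : ℝ → ℝ := fun x => (a * d * x ^ 2 + 2 * a * e * x + (b * e - c * d)) / (d * x + e) ^ 2 with hF1
  set F2 : ℝ → ℝ := fun x => C / (d * x + e) ^ 3 with hF2
  set F3 : ℝ → ℝ := fun x => (-3 * d * C) / (d * x + e) ^ 4 with hF3
  set F4 : ℝ → ℝ := fun x => (12 * d ^ 2 * C) / (d * x + e) ^ 5 with hF4
  set F5 : ℝ → ℝ := fun x => (-60 * d ^ 3 * C) / (d * x + e) ^ 6 with hF5
  have hS : IsOpen {x : ℝ | d * x + e ≠ 0} := by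
    have : Continuous fun x : ℝ => d * x + e := by continuity
    exact isOpen_compl_singleton.preimage this
  have hlin : ∀ x : ℝ, HasDerivAt (fun x : ℝ => d * x + e) d x := by
    intro x
    simpa using ((hasDerivAt_id x).const_mul d).add_const e
  have hpow : ∀ (m : ℕ) (x : ℝ),
      HasDerivAt (fun x : ℝ => (d * x + e) ^ m) (m * (d * x + e) ^ (m - 1) * d) x := by
    intro m x
    simpa [mul_comm, mul_assoc] using (hlin x).fun_pow m
  have hnum0 : ∀ x : ℝ, HasDerivAt (fun x : ℝ => a * x ^ 2 + b * x + c) (2 * a * x + b) x := by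
    intro x
    have h := (((hasDerivAt_pow 2 x).const_mul a).add ((hasDerivAt_id x).const_mul b)).add_const c
    refine h.congr_deriv ?_
    norm_num
    ring
  have hnum1 : ∀ x : ℝ,
      HasDerivAt (fun x : ℝ => a * d * x ^ 2 + 2 * a * e * x + (b * e - c * d))
        (2 * (a * d) * x + 2 * a * e) x := by
    intro x
    have h := (((hasDerivAt_pow 2 x).const_mul (a * d)).add
      ((hasDerivAt_id x).const_mul (2 * a * e))).add_const (b * e - c * d)
    refine h.congr_deriv ?_
    norm_num
    ring
  -- derivative steps
  have h01 : ∀ x, d * x + e ≠ 0 → HasDerivAt F0 (F1 x) x := by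
    intro x hx
    have h := (hnum0 x).div (hlin x) hx
    refine h.congr_deriv ?_
    symm
    rw [hF1]
    field_simp
    ring
  have h12 : ∀ x, d * x + e ≠ 0 → HasDerivAt F1 (F2 x) x := by
    intro x hx
    have hx2 : (d * x + e) ^ 2 ≠ 0 := pow_ne_zero _ hx
    have h := (hnum1 x).div (hpow 2 x) hx2
    refine h.congr_deriv ?_
    symm
    rw [hF2, hCdef]
    field_simp
    ring
  have h23 : ∀ x, d * x + e ≠ 0 → HasDerivAt F2 (F3 x) x := by
    intro x hx
    have hx3 : (d * x + e) ^ 3 ≠ 0 := pow_ne_zero _ hx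
    have h := (hasDerivAt_const x C).div (hpow 3 x) hx3
    refine h.congr_deriv ?_
    symm
    rw [hF3]
    field_simp
    ring
  have h34 : ∀ x, d * x + e ≠ 0 → HasDerivAt F3 (F4 x) x := by
    intro x hx
    have hx4 : (d * x + e) ^ 4 ≠ 0 := pow_ne_zero _ hx
    have h := (hasDerivAt_const x (-3 * d * C)).div (hpow 4 x) hx4
    refine h.congr_deriv ?_
    symm
    rw [hF4]
    field_simp
    ring
  have h45 : ∀ x, d * x + e ≠ 0 → HasDerivAt F4 (F5 x) x := by
    intro x hx
    have hx5 : (d * x + e) ^ 5 ≠ 0 := pow_ne_zero _ hx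
    have h := (hasDerivAt_const x (12 * d ^ 2 * C)).div (hpow 5 x) hx5
    refine h.congr_deriv ?_
    symm
    rw [hF5]
    field_simp
    ring
  -- identify iterated derivatives on the open set
  have e1 : ∀ x, d * x + e ≠ 0 → iteratedDeriv 1 F0 x = F1 x := by
    intro x hx
    rw [iteratedDeriv_one]
    exact (h01 x hx).deriv
  have step : ∀ (k : ℕ) (Fk Fk1 : ℝ → ℝ),
      (∀ x, d * x + e ≠ 0 → iteratedDeriv k F0 x = Fk x) →
      (∀ x, d * x + e ≠ 0 → HasDerivAt Fk (Fk1 x) x) →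
      ∀ x, d * x + e ≠ 0 → iteratedDeriv (k + 1) F0 x = Fk1 x := by
    intro k Fk Fk1 hk hder x hx
    rw [iteratedDeriv_succ]
    have heq : iteratedDeriv k F0 =ᶠ[nhds x] Fk :=
      Filter.eventuallyEq_of_mem (hS.mem_nhds hx) hk
    rw [heq.deriv_eq]
    exact (hder x hx).deriv
  have e2 := step 1 F1 F2 e1 h12
  have e3 := step 2 F2 F3 e2 h23
  have e4 := step 3 F3 F4 e3 h34
  have e5 := step 4 F4 F5 e4 h45
  have hE2 := e2 p hp0
  have hE3 := e3 p hp0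
  have hE4 := e4 p hp0
  have hE5 := e5 p hp0
  rw [monge]
  norm_num at hE2 hE3 hE4 hE5
  rw [hE2, hE3, hE4, hE5, hF2, hF3, hF4, hF5]
  field_simp
  ring
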